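/- Let (X, w) be a weighted pure d-dimensional simplicial complex and let i, k ≥ 0 satisfy i + k + 1 ≤ d. Then for all f, g ∈ C^k(X; ℝ): ⟨f, g⟩ = Σ_{σ ∈ X(i)} w(σ) ⟨f|_σ, g|_σ⟩_{X_σ}, where f|_σ ∈ C^k(X_σ; ℝ) is the restriction of f to X_σ(k) ⊆ X(k) and ⟨·,·⟩_{X_σ} is the inner product taken with respect to the link weights w_σ. -/

import Mathlib

/-!
Weighted pure simplicial complexes, links, cochains, signless differentials
and high dimensional random walk operators.

Conventions: faces are `Finset`s of vertices. A cochain "of dimension `k`"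
(an element of `C^k(X;ℝ)`) is represented by a function `Finset V → ℝ`
evaluated on faces of **cardinality** `c = k + 1`; all operators are indexed
by cardinality.
-/

open Finset

namespace HDRW

noncomputable section

variable {V : Type*} [DecidableEq V] [Fintype V]

/-- A weighted family of faces (the data of a weighted complex or of a link). -/
structure WFam (V : Type*) [DecidableEq V] [Fintype V] where
  faces : Finset (Finset V)
  w : Finset V → ℝ

namespace WFam

/-- The faces of cardinality `c` (i.e. of dimension `c - 1`). -/
def dimFaces (Y : WFam V) (c : ℕ) : Finset (Finset V) :=
  Y.faces.filter fun σ => σ.card = c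

/-- The link of a face `τ`, as a weighted family; the weights are
`w_τ(s) = w (s ∪ τ) / (C(|s| + |τ|, |τ|) * w τ)`. -/
def link (Y : WFam V) (τ : Finset V) : WFam V where
  faces := Finset.univ.powerset.filter fun s => Disjoint s τ ∧ s ∪ τ ∈ Y.faces
  w := fun s => Y.w (s ∪ τ) / (((s.card + τ.card).choose τ.card : ℝ) * Y.w τ)

/-- The inner product of two `c`-cochains: `⟨f, g⟩ = Σ_{σ} w σ * f σ * g σ`. -/
def inner (Y : WFam V) (c : ℕ) (f g : Finset V → ℝ) : ℝ :=
  ∑ σ ∈ Y.dimFaces c, Y.w σ * (f σ * g σ)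

/-- The squared norm `‖f‖² = ⟨f, f⟩` of a `c`-cochain. -/
def norm2 (Y : WFam V) (c : ℕ) (f : Finset V → ℝ) : ℝ := Y.inner c f f

end WFam

/-- The signless differential `d` from cochains on faces of cardinality `c`
(dimension `c-1`) to cochains on faces of cardinality `c+1`:
`(d f)(σ) = (1/(c+1)) Σ_{τ ⊆ σ, |τ| = c} f τ`. -/
def sDiff (c : ℕ) (f : Finset V → ℝ) : Finset V → ℝ :=
  fun σ => ((c : ℝ) + 1)⁻¹ * ∑ τ ∈ σ.powerset.filter (fun τ => τ.card = c), f τ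

/-- Iterated signless differential `C_a → C_{a+n}` (in cardinality indexing),
i.e. `d_{a+n-2} ⋯ d_{a-1}` in dimension indexing. -/
def sDiffIter (a : ℕ) : ℕ → (Finset V → ℝ) → (Finset V → ℝ)
  | 0, f => f
  | n + 1, f => sDiff (a + n) (sDiffIter a n f)

namespace WFam

/-- The adjoint `d^*` of the signless differential, from cochains on faces of
cardinality `c+1` to cochains on faces of cardinality `c`; it is given by the
explicit formula `(d^* f)(τ) = Σ_{σ ∈ X(c), τ ⊆ σ} w_τ(σ ∖ τ) * f σ` (a sum
over the cardinality-`(c+1)` faces containing `τ`). -/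
def sAdj (Y : WFam V) (c : ℕ) (f : Finset V → ℝ) : Finset V → ℝ :=
  fun τ => ∑ σ ∈ (Y.dimFaces (c + 1)).filter (fun σ => τ ⊆ σ),
    (Y.link τ).w (σ \ τ) * f σ

/-- Iterated adjoint of the signless differential, `C_{a+n} → C_a`
(in cardinality indexing), i.e. `d_{a-1}^* ⋯ d_{a+n-2}^*`. -/
def sAdjIter (Y : WFam V) : ℕ → ℕ → (Finset V → ℝ) → (Finset V → ℝ)
  | _, 0, f => f
  | a, n + 1, f => Y.sAdj a (sAdjIter Y (a + 1) n f)

/-- The non-lazy up-down random walk operator `M⁺` on cochains of cardinality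
`c` (dimension `k = c-1`): `(M⁺ f)(σ) = (1/(k+1)) Σ_{τ, σ ∪ τ ∈ X(k+1)} w_σ(τ∖σ) f τ`. -/
def nonLazy (Y : WFam V) (c : ℕ) (f : Finset V → ℝ) : Finset V → ℝ :=
  fun σ => (c : ℝ)⁻¹ *
    ∑ τ ∈ (Y.dimFaces c).filter (fun τ => σ ∪ τ ∈ Y.dimFaces (c + 1)),
      (Y.link σ).w (τ \ σ) * f τ

/-- The (lazy) up-down random walk operator `U` on cochains of cardinality `c`
(dimension `k = c-1`):
`(U f)(σ) = (1/(k+2)) f σ + (1/(k+2)) Σ_{τ, σ ∪ τ ∈ X(k+1)} w_σ(τ∖σ) f τ`. -/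
def upDown (Y : WFam V) (c : ℕ) (f : Finset V → ℝ) : Finset V → ℝ :=
  fun σ => ((c : ℝ) + 1)⁻¹ * f σ + ((c : ℝ) + 1)⁻¹ *
    ∑ τ ∈ (Y.dimFaces c).filter (fun τ => σ ∪ τ ∈ Y.dimFaces (c + 1)),
      (Y.link σ).w (τ \ σ) * f τ

/-- The down-up random walk operator `D` on cochains of cardinality `c`
(dimension `k = c-1`). -/
def downUp (Y : WFam V) (c : ℕ) (f : Finset V → ℝ) : Finset V → ℝ :=
  fun σ => (c : ℝ)⁻¹ *
      (∑ τ' ∈ σ.powerset.filter (fun τ' => τ'.card = c - 1), (Y.link τ').w (σ \ τ')) * f σ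
    + (c : ℝ)⁻¹ *
      ∑ τ ∈ (Y.dimFaces c).filter (fun τ => τ ≠ σ ∧ σ ∩ τ ∈ Y.dimFaces (c - 1)),
        (Y.link (σ ∩ τ)).w (τ \ σ) * f τ

/-- The `i`-down-up operator `D^i = d ⋯ d d^* ⋯ d^*` (going down `i+1` steps and
back up) on cochains of cardinality `c` (dimension `k = c-1`); in dimension
indexing this is `D_k^i = d_{k-1} ⋯ d_{k-i-1} d_{k-i-1}^* ⋯ d_{k-1}^*`. -/
def downUpIter (Y : WFam V) (c i : ℕ) (f : Finset V → ℝ) : Finset V → ℝ :=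
  sDiffIter (c - (i + 1)) (i + 1) (Y.sAdjIter (c - (i + 1)) (i + 1) f)

/-- `Y` (through its 1-skeleton) is a `γ`-(one sided) spectral expander:
every function on the vertices orthogonal to the constants has Rayleigh
quotient of the non-lazy random walk at most `γ` (Rayleigh characterization of
"the second largest eigenvalue of `M₀⁺` is at most `γ`"). -/
def isExpander (Y : WFam V) (γ : ℝ) : Prop :=
  ∀ f : Finset V → ℝ, Y.inner 1 f (fun _ => 1) = 0 →
    Y.inner 1 (Y.nonLazy 1 f) f ≤ γ * Y.norm2 1 f

/-- `Y` (through its 1-skeleton) is connected: the eigenvalue `1` of the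
non-lazy random walk `M₀⁺` has multiplicity one, i.e. every nonzero function on
the vertices orthogonal to the constants has Rayleigh quotient strictly
less than `1`. -/
def isConnected (Y : WFam V) : Prop :=
  ∀ f : Finset V → ℝ, Y.inner 1 f (fun _ => 1) = 0 → Y.norm2 1 f ≠ 0 →
    Y.inner 1 (Y.nonLazy 1 f) f < Y.norm2 1 f

/-- `f` is an `i`-level cochain of cardinality `c` (dimension `k = c-1`) with
respect to localization: for every face `σ` of cardinality `i` (i.e. of
dimension `i-1`), the localization `f_σ` is orthogonal to the constants in the
link `X_σ`. -/
def isLevel (Y : WFam V) (i c : ℕ) (f : Finset V → ℝ) : Prop :=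
  ∀ σ ∈ Y.dimFaces i,
    (Y.link σ).inner (c - i) (fun s => f (σ ∪ s)) (fun _ => 1) = 0

/-- `f` is a proper `i`-level cochain of cardinality `c`: it is an `i`-level
cochain which is in addition orthogonal to every `(i+1)`-level cochain. -/
def isProperLevel (Y : WFam V) (i c : ℕ) (f : Finset V → ℝ) : Prop :=
  Y.isLevel i c f ∧ ∀ g : Finset V → ℝ, Y.isLevel (i + 1) c g → Y.inner c f g = 0

end WFam

/-- The coboundary operator on oriented cochains (represented by their values
on the increasing ordering of each face, with respect to a linear order on the
vertices): `(δ f)(σ) = Σ_{j} (-1)^j f(σ ∖ {j-th smallest element of σ})`. -/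
def coboundary {V : Type*} [LinearOrder V] [Fintype V] (f : Finset V → ℝ) :
    Finset V → ℝ :=
  fun σ => ∑ v ∈ σ, (-1 : ℝ) ^ (σ.filter (fun u => u < v)).card * f (σ.erase v)

/-- A weighted pure `d`-dimensional simplicial complex: a downward closed
family of faces, each contained in a face of cardinality `d+1`
(dimension `d`), together with a weight function `w : X → (0, 1]` summing to
`1` on the top faces and satisfying the averaging recurrence on lower faces. -/
structure WSC (V : Type*) [DecidableEq V] [Fintype V] (d : ℕ) extends WFam V where
  empty_mem : ∅ ∈ faces
  down_closed : ∀ ⦃σ⦄, σ ∈ faces → ∀ ⦃τ⦄, τ ⊆ σ → τ ∈ faces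
  isPure : ∀ σ ∈ faces, ∃ σ' ∈ faces, σ ⊆ σ' ∧ σ'.card = d + 1
  w_pos : ∀ σ ∈ faces, 0 < w σ
  w_le_one : ∀ σ ∈ faces, w σ ≤ 1
  w_sum_top : ∑ σ ∈ faces.filter (fun σ => σ.card = d + 1), w σ = 1
  w_down : ∀ τ ∈ faces, τ.card ≤ d →
    w τ = (((d + 1).choose τ.card : ℝ))⁻¹ *
      ∑ σ ∈ faces.filter (fun σ => σ.card = d + 1 ∧ τ ⊆ σ), w σ


variable {d : ℕ}

/-- Lemma A -/
lemma sum_top (X : WSC V d) {τ : Finset V} (hτ : τ ∈ X.faces) (hcard : τ.card ≤ d + 1) :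
    ∑ ρ ∈ X.faces.filter (fun ρ => ρ.card = d + 1 ∧ τ ⊆ ρ), X.w ρ
      = (((d + 1).choose τ.card : ℝ)) * X.w τ := by
  rcases Nat.lt_or_ge τ.card (d + 1) with hlt | hge
  · have h := X.w_down τ hτ (Nat.lt_succ_iff.mp hlt)
    have hC : (((d + 1).choose τ.card : ℝ)) ≠ 0 := by
      exact_mod_cast (Nat.choose_pos (Nat.le_of_lt_succ hlt |>.trans (Nat.le_succ d))).ne'
    rw [h]
    field_simp
  · have hcd : τ.card = d + 1 := le_antisymm hcard hge
    have hfilter : X.faces.filter (fun ρ => ρ.card = d + 1 ∧ τ ⊆ ρ) = {τ} := by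
      ext ρ
      simp only [mem_filter, mem_singleton]
      constructor
      · rintro ⟨_, hρc, hsub⟩
        exact (Finset.eq_of_subset_of_card_le hsub (by omega)).symm
      · rintro rfl
        exact ⟨hτ, hcd, subset_rfl⟩
    rw [hfilter, Finset.sum_singleton, hcd, Nat.choose_self]
    simp

/-- Key lemma -/
lemma key (X : WSC V d) (a : ℕ) {s : Finset V} (hs : s ∈ X.faces)
    (hle : s.card + a ≤ d + 1) :
    ∑ b ∈ (X.toWFam.dimFaces a).filter (fun b => Disjoint s b ∧ s ∪ b ∈ X.faces),
        X.w (s ∪ b)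
      = (((s.card + a).choose a : ℝ)) * X.w s := by
  set c := s.card with hcdef
  have hC : (((d + 1).choose (c + a) : ℝ)) ≠ 0 := by
    exact_mod_cast (Nat.choose_pos hle).ne'
  apply mul_left_cancel₀ hC
  -- expand each w (s ∪ b) through top faces
  have step1 : ∀ b ∈ (X.toWFam.dimFaces a).filter
      (fun b => Disjoint s b ∧ s ∪ b ∈ X.faces),
      ((d + 1).choose (c + a) : ℝ) * X.w (s ∪ b)
        = ∑ ρ ∈ X.faces.filter (fun ρ => ρ.card = d + 1 ∧ s ∪ b ⊆ ρ), X.w ρ := by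
    intro b hb
    simp only [mem_filter, WFam.dimFaces] at hb
    obtain ⟨⟨hbF, hbc⟩, hdisj, hub⟩ := hb
    have hcard : (s ∪ b).card = c + a := by
      rw [Finset.card_union_of_disjoint hdisj, hbc]
    rw [← hcard, sum_top X hub (by rw [hcard]; exact hle)]
  rw [Finset.mul_sum, Finset.sum_congr rfl step1]
  -- rewrite inner filtered sums as if-sums over top faces, swap
  have step2 : ∀ b : Finset V,
      ∑ ρ ∈ X.faces.filter (fun ρ => ρ.card = d + 1 ∧ s ∪ b ⊆ ρ), X.w ρ
        = ∑ ρ ∈ X.faces.filter (fun ρ => ρ.card = d + 1),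
            if s ∪ b ⊆ ρ then X.w ρ else 0 := by
    intro b
    rw [← Finset.sum_filter, Finset.filter_filter]
  rw [Finset.sum_congr rfl (fun b _ => step2 b), Finset.sum_comm]
  -- now for each top face ρ, count the b's
  have step3 : ∀ ρ ∈ X.faces.filter (fun ρ => ρ.card = d + 1),
      ∑ b ∈ (X.toWFam.dimFaces a).filter (fun b => Disjoint s b ∧ s ∪ b ∈ X.faces),
          (if s ∪ b ⊆ ρ then X.w ρ else 0)
        = (if s ⊆ ρ then (((d + 1 - c).choose a : ℝ)) else 0) * X.w ρ := by
    intro ρ hρ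
    simp only [mem_filter] at hρ
    obtain ⟨hρF, hρc⟩ := hρ
    rw [← Finset.sum_filter, Finset.filter_filter]
    by_cases hsρ : s ⊆ ρ
    · have hset : (X.toWFam.dimFaces a).filter
          (fun b => (Disjoint s b ∧ s ∪ b ∈ X.faces) ∧ s ∪ b ⊆ ρ)
            = (ρ \ s).powersetCard a := by
        ext b
        simp only [mem_filter, WFam.dimFaces, Finset.mem_powersetCard]
        constructor
        · rintro ⟨⟨hbF, hbc⟩, ⟨hdisj, hub⟩, hsub⟩
          refine ⟨fun x hx => Finset.mem_sdiff.mpr ⟨hsub (Finset.mem_union_right _ hx),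
            fun hxs => (Finset.disjoint_left.mp hdisj hxs) hx⟩, hbc⟩
        · rintro ⟨hsub, hbc⟩
          have hbρ : b ⊆ ρ := hsub.trans (Finset.sdiff_subset)
          have hdisj : Disjoint s b := by
            refine Finset.disjoint_left.mpr fun x hxs hxb => ?_
            exact (Finset.mem_sdiff.mp (hsub hxb)).2 hxs
          have huρ : s ∪ b ⊆ ρ := Finset.union_subset hsρ hbρ
          exact ⟨⟨X.down_closed hρF hbρ, hbc⟩, ⟨hdisj, X.down_closed hρF huρ⟩, huρ⟩
      rw [hset, Finset.sum_const, Finset.card_powersetCard,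
        Finset.card_sdiff_of_subset hsρ, hρc, if_pos hsρ, nsmul_eq_mul, hcdef]
    · have hset : (X.toWFam.dimFaces a).filter
          (fun b => (Disjoint s b ∧ s ∪ b ∈ X.faces) ∧ s ∪ b ⊆ ρ) = ∅ := by
        apply Finset.filter_false_of_mem
        rintro b _ ⟨_, hsub⟩
        exact hsρ ((Finset.subset_union_left).trans hsub)
      rw [hset, Finset.sum_empty, if_neg hsρ, zero_mul]
  rw [Finset.sum_congr rfl step3]
  have step4 : ∑ ρ ∈ X.faces.filter (fun ρ => ρ.card = d + 1),
      (if s ⊆ ρ then (((d + 1 - c).choose a : ℝ)) else 0) * X.w ρ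
        = ((d + 1 - c).choose a : ℝ) *
          ∑ ρ ∈ X.faces.filter (fun ρ => ρ.card = d + 1 ∧ s ⊆ ρ), X.w ρ := by
    simp_rw [ite_mul, zero_mul, ← Finset.sum_filter, Finset.filter_filter,
      Finset.mul_sum]
  rw [step4, sum_top X hs (by omega)]
  have h1 := Nat.choose_mul (n := d + 1) (k := c + a) (s := c) (Nat.le_add_right c a)
  simp only [Nat.add_sub_cancel_left] at h1
  have h2 : (c + a).choose a = (c + a).choose c := by
    have := Nat.choose_symm (n := c + a) (k := c) (Nat.le_add_right c a)
    simpa using this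
  have hid : (d + 1).choose (c + a) * ((c + a).choose a) =
      (d + 1).choose c * ((d + 1 - c).choose a) := by rw [h2]; exact h1
  have hidR : (((d + 1).choose (c + a) : ℝ)) * (((c + a).choose a : ℝ))
      = (((d + 1).choose c : ℝ)) * (((d + 1 - c).choose a : ℝ)) := by exact_mod_cast hid
  rw [← hcdef]
  linear_combination (-X.w s) * hidR
/-- For `i, k ≥ 0` with `i + k + 1 ≤ d` (here `a = i + 1`,
`c = k + 1`, so `a + c ≤ d + 1`) and all `f, g ∈ C^k(X;ℝ)`:
`⟨f, g⟩ = Σ_{σ ∈ X(i)} w σ ⟨f|_σ, g|_σ⟩_{X_σ}`, where `f|_σ ∈ C^k(X_σ;ℝ)` is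
the restriction of `f` to `X_σ(k) ⊆ X(k)` and the local inner product is taken
with respect to the link weights `w_σ`. -/
theorem inner_eq_sum_restriction (X : WSC V d) (a c : ℕ) (ha : 1 ≤ a) (hc1 : 1 ≤ c)
    (h : a + c ≤ d + 1) (f g : Finset V → ℝ) :
    X.toWFam.inner c f g =
      ∑ σ ∈ X.toWFam.dimFaces a, X.toWFam.w σ * (X.toWFam.link σ).inner c f g := by
  have hCne : (((c + a).choose a : ℝ)) ≠ 0 := by
    exact_mod_cast (Nat.choose_pos (Nat.le_add_left a c)).ne'
  have hlink : ∀ b, b ∈ X.toWFam.dimFaces a →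
      (X.toWFam.link b).dimFaces c
        = (X.toWFam.dimFaces c).filter (fun s => Disjoint s b ∧ s ∪ b ∈ X.faces) := by
    intro b _
    ext s
    simp only [WFam.dimFaces, WFam.link, mem_filter, Finset.mem_powerset]
    constructor
    · rintro ⟨⟨_, hdisj, hub⟩, hsc⟩
      exact ⟨⟨X.down_closed hub Finset.subset_union_left, hsc⟩, hdisj, hub⟩
    · rintro ⟨⟨hsF, hsc⟩, hdisj, hub⟩
      exact ⟨⟨Finset.subset_univ s, hdisj, hub⟩, hsc⟩
  have hterm : ∀ b ∈ X.toWFam.dimFaces a,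
      X.toWFam.w b * (X.toWFam.link b).inner c f g
        = ∑ s ∈ X.toWFam.dimFaces c,
            if Disjoint s b ∧ s ∪ b ∈ X.faces
            then X.w (s ∪ b) * (f s * g s / (((c + a).choose a : ℝ))) else 0 := by
    intro b hb
    have hb' := hb
    simp only [WFam.dimFaces, mem_filter] at hb'
    obtain ⟨hbF, hbc⟩ := hb'
    rw [WFam.inner, hlink b hb, Finset.mul_sum, Finset.sum_filter]
    apply Finset.sum_congr rfl
    intro s hsm
    simp only [WFam.dimFaces, mem_filter] at hsm
    by_cases hcond : Disjoint s b ∧ s ∪ b ∈ X.faces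
    · rw [if_pos hcond, if_pos hcond]
      have hw : X.w b ≠ 0 := (X.w_pos b hbF).ne'
      simp only [WFam.link]
      rw [hsm.2, hbc]
      field_simp
    · rw [if_neg hcond, if_neg hcond]
  rw [Finset.sum_congr rfl hterm, Finset.sum_comm, WFam.inner]
  apply Finset.sum_congr rfl
  intro s hsm
  simp only [WFam.dimFaces, mem_filter] at hsm
  obtain ⟨hsF, hsc⟩ := hsm
  rw [← Finset.sum_filter, ← Finset.sum_mul,
    key X a hsF (by rw [hsc]; omega), hsc]
  field_simp

end

end HDRW
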